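/- Let g : [e₀, ∞) → ℝ be continuous and X a non-degenerate random variable supported on [e₀, ∞) with E[g(X)] = 0 and E[(X − h)·g(X)] = 0 for every real h. Then g has at least two distinct zeros h₁ ≠ h₂ in the support interval of X. Equivalently: if g has at most one zero, then either E[g(X)] ≠ 0 or there exists h₁ with E[(X − h₁) g(X)] ≠ 0. -/

import Mathlib

open MeasureTheory

lemma sign_dichotomy {g : ℝ → ℝ} {s : Set ℝ} (hs : s.OrdConnected)
    (hg : ContinuousOn g s) (hnz : ∀ x ∈ s, g x ≠ 0) :
    (∀ x ∈ s, 0 < g x) ∨ (∀ x ∈ s, g x < 0) := by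
  by_cases hpos : ∀ x ∈ s, 0 < g x
  · exact Or.inl hpos
  · push_neg at hpos
    obtain ⟨a, ha, hga⟩ := hpos
    have hga' : g a < 0 := lt_of_le_of_ne hga (hnz a ha)
    right
    intro x hx
    by_contra hgx
    push_neg at hgx
    have hgx' : 0 < g x := lt_of_le_of_ne hgx (Ne.symm (hnz x hx))
    have hsub : Set.uIcc a x ⊆ s := hs.uIcc_subset ha hx
    have h0 : (0:ℝ) ∈ Set.uIcc (g a) (g x) := by
      rw [Set.mem_uIcc]
      exact Or.inl ⟨le_of_lt hga', le_of_lt hgx'⟩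
    obtain ⟨c, hc, hgc⟩ := intermediate_value_uIcc (hg.mono hsub) h0
    exact hnz c (hsub hc) hgc

lemma ae_eq_of_nonneg_int_zero {Ω : Type*} [MeasureSpace Ω]
    (X : Ω → ℝ) (f : ℝ → ℝ) (e₀ h₁ : ℝ)
    (hsupp : ∀ᵐ ω, e₀ ≤ X ω)
    (hint : Integrable fun ω => f (X ω))
    (hpos : ∀ x ∈ Set.Ici e₀, 0 ≤ f x)
    (hzero : ∀ x ∈ Set.Ici e₀, f x = 0 → x = h₁)
    (hI : (∫ ω, f (X ω)) = 0) : ∀ᵐ ω, X ω = h₁ := by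
  have h0 : (fun ω => f (X ω)) =ᵐ[volume] 0 :=
    (integral_eq_zero_iff_of_nonneg_ae (hsupp.mono fun ω h => hpos _ h) hint).mp hI
  filter_upwards [h0, hsupp] with ω h1 h2
  exact hzero _ h2 h1

/-- If a continuous function `g` has zero mean against a non-degenerate random
variable `X` supported on `[e₀, ∞)` and `E[(X − h) g(X)] = 0` for every `h`, then `g`
has at least two distinct zeros in `[e₀, ∞)`. -/
theorem residual_has_two_zeros {Ω : Type*} [MeasureSpace Ω]
    [IsProbabilityMeasure (volume : Measure Ω)]
    (X : Ω → ℝ) (g : ℝ → ℝ) (e₀ : ℝ)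
    (hsupp : ∀ᵐ ω, e₀ ≤ X ω)
    (hg : ContinuousOn g (Set.Ici e₀))
    (hX : Integrable X) (hX2 : Integrable (fun ω => (X ω) ^ 2))
    (hgX : Integrable (fun ω => g (X ω))) (hXgX : Integrable (fun ω => X ω * g (X ω)))
    (hvar : 0 < (∫ ω, (X ω) ^ 2) - (∫ ω, X ω) ^ 2)
    (hmean : ∫ ω, g (X ω) = 0)
    (horth : ∀ h : ℝ, ∫ ω, (X ω - h) * g (X ω) = 0) :
    ∃ h₁ h₂ : ℝ, h₁ ∈ Set.Ici e₀ ∧ h₂ ∈ Set.Ici e₀ ∧ h₁ ≠ h₂ ∧ g h₁ = 0 ∧ g h₂ = 0 := by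
  haveI : (MeasureTheory.ae (volume : Measure Ω)).NeBot :=
    MeasureTheory.ae_neBot.mpr (IsProbabilityMeasure.ne_zero _)
  -- Step 1: there is at least one zero of g in Ici e₀.
  have hz1 : ∃ h₁ ∈ Set.Ici e₀, g h₁ = 0 := by
    by_contra hno
    push_neg at hno
    have hd := sign_dichotomy Set.ordConnected_Ici hg hno
    have hsign : ∀ᵐ ω, g (X ω) ≠ 0 := hsupp.mono fun ω h => hno _ h
    rcases hd with hp | hn
    · have h0 : (fun ω => g (X ω)) =ᵐ[volume] 0 :=
        (integral_eq_zero_iff_of_nonneg_ae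
          (hsupp.mono fun ω h => le_of_lt (hp _ h)) hgX).mp hmean
      obtain ⟨ω, h1, h2⟩ := (h0.and hsign).exists
      exact h2 h1
    · have hmean' : (∫ ω, -g (X ω)) = 0 := by
        rw [integral_neg, hmean, neg_zero]
      have h0 : (fun ω => -g (X ω)) =ᵐ[volume] 0 :=
        (integral_eq_zero_iff_of_nonneg_ae
          (hsupp.mono fun ω h => neg_nonneg.mpr (le_of_lt (hn _ h))) hgX.neg).mp hmean'
      obtain ⟨ω, h1, h2⟩ := (h0.and hsign).exists
      exact h2 (neg_eq_zero.mp h1)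
  obtain ⟨h₁, hh₁, hgz⟩ := hz1
  -- Step 2: suppose h₁ were the only zero; derive a contradiction with hvar.
  by_contra hno2
  push_neg at hno2
  have huniq : ∀ x ∈ Set.Ici e₀, g x = 0 → x = h₁ := by
    intro x hx hgx
    by_contra hne
    exact (hno2 x h₁ hx hh₁ hne hgx) hgz
  -- sign dichotomies left and right of h₁
  have hnzR : ∀ x ∈ Set.Ioi h₁, g x ≠ 0 := by
    intro x hx h0
    have hx' : x ∈ Set.Ici e₀ := Set.mem_Ici.mpr (le_trans (Set.mem_Ici.mp hh₁) (le_of_lt (Set.mem_Ioi.mp hx)))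
    exact absurd (huniq x hx' h0) (ne_of_gt hx)
  have hnzL : ∀ x ∈ Set.Ico e₀ h₁, g x ≠ 0 := by
    intro x hx h0
    exact absurd (huniq x hx.1 h0) (ne_of_lt hx.2)
  have hsubR : Set.Ioi h₁ ⊆ Set.Ici e₀ := fun x hx => Set.mem_Ici.mpr (le_trans (Set.mem_Ici.mp hh₁) (le_of_lt (Set.mem_Ioi.mp hx)))
  have hsubL : Set.Ico e₀ h₁ ⊆ Set.Ici e₀ := fun x hx => hx.1
  have hdR := sign_dichotomy Set.ordConnected_Ioi (hg.mono hsubR) hnzR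
  have hdL := sign_dichotomy Set.ordConnected_Ico (hg.mono hsubL) hnzL
  -- Integrability of (x - h₁) * g x composed with X
  have hint1 : Integrable fun ω => (X ω - h₁) * g (X ω) := by
    have := hXgX.sub (hgX.const_mul h₁)
    simpa [sub_mul, Pi.sub_def] using this
  -- In every case, X = h₁ a.e.
  have hXae : ∀ᵐ ω, X ω = h₁ := by
    rcases hdL with hL | hL <;> rcases hdR with hR | hR
    · -- g ≥ 0 on Ici e₀
      refine ae_eq_of_nonneg_int_zero X g e₀ h₁ hsupp hgX ?_ huniq hmean
      intro x hx
      rcases lt_trichotomy x h₁ with h | h | h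
      · exact le_of_lt (hL x ⟨hx, h⟩)
      · rw [h, hgz]
      · exact le_of_lt (hR x h)
    · -- g > 0 left, g < 0 right : use (h₁ - x) * g x ≥ 0
      refine ae_eq_of_nonneg_int_zero X (fun x => (h₁ - x) * g x) e₀ h₁ hsupp
        (hint1.neg.congr (Filter.Eventually.of_forall fun ω => by simp only [Pi.neg_apply]; ring)) ?_ ?_ ?_
      · intro x hx
        rcases lt_trichotomy x h₁ with h | h | h
        · exact mul_nonneg (by linarith) (le_of_lt (hL x ⟨hx, h⟩))
        · simp [h, hgz]
        · exact mul_nonneg_of_nonpos_of_nonpos (by linarith) (le_of_lt (hR x h))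
      · intro x hx h0
        rcases mul_eq_zero.mp h0 with h | h
        · linarith [sub_eq_zero.mp h]
        · exact huniq x hx h
      · have : (∫ ω, (h₁ - X ω) * g (X ω)) = -∫ ω, (X ω - h₁) * g (X ω) := by
          rw [← integral_neg]
          congr 1; funext ω; ring
        rw [this, horth h₁, neg_zero]
    · -- g < 0 left, g > 0 right : use (x - h₁) * g x ≥ 0
      refine ae_eq_of_nonneg_int_zero X (fun x => (x - h₁) * g x) e₀ h₁ hsupp hint1 ?_ ?_
        (horth h₁)
      · intro x hx
        rcases lt_trichotomy x h₁ with h | h | h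
        · exact mul_nonneg_of_nonpos_of_nonpos (by linarith) (le_of_lt (hL x ⟨hx, h⟩))
        · simp [h, hgz]
        · exact mul_nonneg (by linarith) (le_of_lt (hR x h))
      · intro x hx h0
        rcases mul_eq_zero.mp h0 with h | h
        · linarith [sub_eq_zero.mp h]
        · exact huniq x hx h
    · -- g ≤ 0 on Ici e₀ : use -g
      refine ae_eq_of_nonneg_int_zero X (fun x => -g x) e₀ h₁ hsupp hgX.neg ?_ ?_ ?_
      · intro x hx
        rcases lt_trichotomy x h₁ with h | h | h
        · exact neg_nonneg.mpr (le_of_lt (hL x ⟨hx, h⟩))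
        · simp [h, hgz]
        · exact neg_nonneg.mpr (le_of_lt (hR x h))
      · intro x hx h0
        exact huniq x hx (neg_eq_zero.mp h0)
      · rw [integral_neg, hmean, neg_zero]
  -- Now the variance is zero, contradiction.
  have hm : (∫ ω, X ω) = h₁ := by
    rw [integral_congr_ae (g := fun _ => h₁) (hXae.mono fun ω h => h)]
    simp
  have hm2 : (∫ ω, (X ω) ^ 2) = h₁ ^ 2 := by
    rw [integral_congr_ae (g := fun _ => h₁ ^ 2) (hXae.mono fun ω h => by rw [h])]
    simp
  rw [hm, hm2] at hvar
  linarith
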